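/- Let a ≥ 3 and A_0 = 0, A_1 = 1, A_{n+2} = a·A_{n+1} − A_n + 1. Then for all n ≥ 2, (A_{2n+1} − 1)/A_{2n} ≥ (A_{2n} − 2)/A_{2n−1}. -/
import Mathlib


/-- For `n ≥ 2`: `(A (2n+1) - 1)/A (2n) ≥ (A (2n) - 2)/A (2n-1)` (as rationals). -/
theorem stmt5 (a : ℤ) (ha : 3 ≤ a) (A : ℕ → ℤ)
    (hA0 : A 0 = 0) (hA1 : A 1 = 1)
    (hrec : ∀ n : ℕ, A (n + 2) = a * A (n + 1) - A n + 1) :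
    ∀ n : ℕ, 2 ≤ n →
      ((A (2 * n + 1) : ℚ) - 1) / (A (2 * n) : ℚ)
        ≥ ((A (2 * n) : ℚ) - 2) / (A (2 * n - 1) : ℚ) := by
  -- monotonicity and nonnegativity
  have mono : ∀ k : ℕ, 0 ≤ A k ∧ A k < A (k + 1) := by
    intro k
    induction k using Nat.strong_induction_on with
    | _ k ih =>
      match k with
      | 0 => exact ⟨by simp [hA0], by simp [hA0, hA1]⟩
      | 1 => refine ⟨by simp [hA1], ?_⟩
             have := hrec 0
             simp [hA0, hA1] at this
             show A 1 < A 2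
             omega
      | (k + 2) =>
        have h1 := ih k (by omega)
        have h2 := ih (k + 1) (by omega)
        have hr := hrec k
        have hr2 := hrec (k + 1)
        constructor
        · nlinarith [h1.1, h1.2, h2.1, h2.2]
        · nlinarith [h1.1, h1.2, h2.1, h2.2]
  have hge : ∀ k : ℕ, (k : ℤ) ≤ A k := by
    intro k
    induction k with
    | zero => simp [hA0]
    | succ k ihk =>
      have := (mono k).2
      push_cast
      omega
  -- key identity
  have key : ∀ k : ℕ, A (k + 2) * A k = A (k + 1) ^ 2 - A (k + 1) := by
    intro k
    induction k with
    | zero => simp [hA0, hA1]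
    | succ k ihk =>
      have h1 := hrec (k + 1)
      have h2 := hrec k
      linear_combination A (k + 1) * h1 + ihk - A (k + 2) * h2
  intro n hn
  obtain ⟨m, rfl⟩ : ∃ m, n = m + 2 := ⟨n - 2, by omega⟩
  have e1 : 2 * (m + 2) = 2 * m + 4 := by ring
  have e2 : 2 * (m + 2) + 1 = 2 * m + 5 := by ring
  have e3 : 2 * (m + 2) - 1 = 2 * m + 3 := by omega
  rw [e2, e3, e1]
  have p1 : (0 : ℤ) < A (2 * m + 3) := by have := hge (2 * m + 3); push_cast at this; omega
  have p2 : (0 : ℤ) < A (2 * m + 4) := by have := hge (2 * m + 4); push_cast at this; omega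
  have hmono : A (2 * m + 3) < A (2 * m + 4) := (mono (2 * m + 3)).2
  have hk := key (2 * m + 3)
  have hZ : (A (2 * m + 4) - 2) * A (2 * m + 4) ≤ (A (2 * m + 5) - 1) * A (2 * m + 3) := by
    nlinarith
  rw [ge_iff_le, div_le_div_iff₀ (by exact_mod_cast p1) (by exact_mod_cast p2)]
  exact_mod_cast hZ
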